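/- For every M > 0 and every d ≥ 3 and 1 ≤ b ≤ d-2, there exists a finite b-balanced set X of unit vectors in R^d with u*(X) ≥ √M. Consequently u**(d, b) = ∞ for d ≥ 3 and 1 ≤ b ≤ d-2. -/

import Mathlib

open scoped RealInnerProductSpace

/-- A finite set `X` of unit vectors of `ℝ^d` is `b`-balanced if the origin belongs to a face
(extreme subset) of `conv X` of dimension `b`, but to no face of smaller dimension. -/
def IsBBalanced (d b : ℕ) (X : Finset (EuclideanSpace ℝ (Fin d))) : Prop :=
  (∃ F : Set (EuclideanSpace ℝ (Fin d)),
      IsExtreme ℝ (convexHull ℝ (X : Set (EuclideanSpace ℝ (Fin d)))) F ∧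
      (0 : EuclideanSpace ℝ (Fin d)) ∈ F ∧ Module.finrank ℝ (vectorSpan ℝ F) = b) ∧
  (∀ F : Set (EuclideanSpace ℝ (Fin d)),
      IsExtreme ℝ (convexHull ℝ (X : Set (EuclideanSpace ℝ (Fin d)))) F →
      (0 : EuclideanSpace ℝ (Fin d)) ∈ F → b ≤ Module.finrank ℝ (vectorSpan ℝ F))

section Aux

variable {d : ℕ}

noncomputable def v3 (i₀ iy iz : Fin d) (a b c : ℝ) : EuclideanSpace ℝ (Fin d) :=
  EuclideanSpace.single i₀ a + EuclideanSpace.single iy b + EuclideanSpace.single iz c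

lemma inner_sgl_sgl (i j : Fin d) (a b : ℝ) :
    ⟪EuclideanSpace.single i a, EuclideanSpace.single j b⟫ = if i = j then a * b else 0 := by
  rw [EuclideanSpace.inner_single_left]
  simp only [EuclideanSpace.single_apply, RCLike.star_def, conj_trivial, mul_ite, mul_zero]

variable {i₀ iy iz : Fin d} (h01 : i₀ ≠ iy) (h02 : i₀ ≠ iz) (h12 : iy ≠ iz)

include h01 h02 h12 in
lemma inner_v3_v3 (a b c x y z : ℝ) :
    ⟪v3 i₀ iy iz a b c, v3 i₀ iy iz x y z⟫ = a * x + b * y + c * z := by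
  simp only [v3, inner_add_left, inner_add_right, inner_sgl_sgl,
    if_pos rfl, if_neg h01, if_neg h02, if_neg h12, if_neg h01.symm, if_neg h02.symm,
    if_neg h12.symm, if_true]
  ring

lemma v3_add (a b c x y z : ℝ) :
    v3 i₀ iy iz a b c + v3 i₀ iy iz x y z = v3 i₀ iy iz (a + x) (b + y) (c + z) := by
  ext j
  simp only [v3, PiLp.add_apply, EuclideanSpace.single_apply]
  split_ifs <;> ring

lemma v3_zero : v3 i₀ iy iz 0 0 0 = 0 := by
  ext j
  simp [v3, EuclideanSpace.single_apply]

lemma v3_single (a : ℝ) : v3 i₀ iy iz a 0 0 = EuclideanSpace.single i₀ a := by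
  ext j
  simp only [v3, PiLp.add_apply, EuclideanSpace.single_apply]
  split_ifs <;> ring

include h01 h02 h12 in
lemma norm_v3 {a b c : ℝ} (h : a ^ 2 + b ^ 2 + c ^ 2 = 1) : ‖v3 i₀ iy iz a b c‖ = 1 := by
  have h2 : ⟪v3 i₀ iy iz a b c, v3 i₀ iy iz a b c⟫ = 1 := by
    rw [inner_v3_v3 h01 h02 h12]; nlinarith
  rw [real_inner_self_eq_norm_sq] at h2
  nlinarith [norm_nonneg (v3 i₀ iy iz a b c)]

include h01 h02 h12 in
lemma norm_v3_z (c : ℝ) (hc : 0 ≤ c) : ‖v3 i₀ iy iz 0 0 c‖ = c := by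
  have h2 : ⟪v3 i₀ iy iz 0 0 c, v3 i₀ iy iz 0 0 c⟫ = c ^ 2 := by
    rw [inner_v3_v3 h01 h02 h12]; ring
  rw [real_inner_self_eq_norm_sq] at h2
  nlinarith [norm_nonneg (v3 i₀ iy iz 0 0 c)]

lemma inner_sgl_v3 {j : Fin d} (hy : j ≠ iy) (hz : j ≠ iz) (t a b c : ℝ) :
    ⟪EuclideanSpace.single j t, v3 i₀ iy iz a b c⟫ = if j = i₀ then t * a else 0 := by
  simp only [v3, inner_add_right, inner_sgl_sgl, if_neg hy, if_neg hz]
  split_ifs <;> ring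

lemma sgl_neg (j : Fin d) (a : ℝ) :
    EuclideanSpace.single j (-a) = -EuclideanSpace.single j a := by
  ext i
  simp only [EuclideanSpace.single_apply, PiLp.neg_apply]
  split_ifs <;> simp

end Aux

set_option maxHeartbeats 0 in
/-- For every `M > 0`, `d ≥ 3` and `1 ≤ b ≤ d - 2` there is a finite `b`-balanced
set `X` of unit vectors in `ℝ^d` admitting a valid farthest-point iteration reaching length
`≥ √M`; hence `u**(d, b) = ∞`. -/
theorem stmt14 (M : ℝ) (hM : 0 < M) (d b : ℕ) (hd : 3 ≤ d) (hb1 : 1 ≤ b) (hb2 : b ≤ d - 2) :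
    ∃ X : Finset (EuclideanSpace ℝ (Fin d)),
      (∀ x ∈ X, ‖x‖ = 1) ∧
      IsBBalanced d b X ∧
      ∃ u : ℕ → EuclideanSpace ℝ (Fin d),
        u 0 = 0 ∧
        (∀ i, ∃ χ ∈ X, (∀ x ∈ X, ⟪χ, u i⟫ ≤ ⟪x, u i⟫) ∧ u (i + 1) = u i + χ) ∧
        ∃ i, Real.sqrt M ≤ ‖u i‖ := by
  classical
  have hbd : b + 2 ≤ d := by omega
  -- the three special coordinates
  obtain ⟨i₀, hi₀⟩ : ∃ i₀ : Fin d, i₀ = ⟨0, by omega⟩ := ⟨_, rfl⟩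
  obtain ⟨iy, hiy⟩ : ∃ iy : Fin d, iy = ⟨b, by omega⟩ := ⟨_, rfl⟩
  obtain ⟨iz, hiz⟩ : ∃ iz : Fin d, iz = ⟨b + 1, by omega⟩ := ⟨_, rfl⟩
  have h01 : i₀ ≠ iy := by simp only [hi₀, hiy, ne_eq, Fin.mk.injEq]; omega
  have h02 : i₀ ≠ iz := by simp only [hi₀, hiz, ne_eq, Fin.mk.injEq]; omega
  have h12 : iy ≠ iz := by simp only [hiy, hiz, ne_eq, Fin.mk.injEq]; omega
  -- numeric parameters
  obtain ⟨T, hTdef⟩ : ∃ T : ℝ, T = Real.sqrt M := ⟨_, rfl⟩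
  have hT0 : 0 ≤ T := by rw [hTdef]; exact Real.sqrt_nonneg M
  obtain ⟨ε, hεdef⟩ : ∃ ε : ℝ, ε = 1 / (40 * (T + 2)) := ⟨_, rfl⟩
  have hden : (0:ℝ) < 40 * (T + 2) := by linarith only [hT0]
  have hε0 : 0 < ε := by rw [hεdef]; exact div_pos one_pos hden
  have hε1 : ε ≤ 1 / 80 := by
    rw [hεdef, div_le_div_iff₀ hden (by norm_num)]
    linarith only [hT0]
  have hεT : ε * (2 * T + 2) ≤ 1 / 20 := by
    rw [hεdef, div_mul_eq_mul_div, one_mul, div_le_div_iff₀ hden (by norm_num)]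
    linarith only [hT0]
  have sqrt_ub : ∀ x y : ℝ, 0 ≤ y → x ≤ y ^ 2 → Real.sqrt x ≤ y := by
    intro x y hy hxy
    calc Real.sqrt x ≤ Real.sqrt (y ^ 2) := Real.sqrt_le_sqrt hxy
    _ = y := Real.sqrt_sq hy
  have sqrt_lb : ∀ x y : ℝ, 0 ≤ y → y ^ 2 ≤ x → y ≤ Real.sqrt x := by
    intro x y hy hxy
    calc y = Real.sqrt (y ^ 2) := (Real.sqrt_sq hy).symm
    _ ≤ Real.sqrt x := Real.sqrt_le_sqrt hxy
  have hε2 : ε ^ 2 ≤ 1 / 6400 := by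
    linarith only [mul_nonneg (sub_nonneg.2 hε1) hε0.le, hε1, hε0.le]
  obtain ⟨g, hgdef⟩ : ∃ g : ℝ, g = Real.sqrt (9 / 25 - ε ^ 2) := ⟨_, rfl⟩
  have hg2 : g ^ 2 = 9 / 25 - ε ^ 2 := by
    rw [hgdef, Real.sq_sqrt]; linarith only [hε2]
  have hg0 : 0 ≤ g := by rw [hgdef]; exact Real.sqrt_nonneg _
  have hgu : g ≤ 3 / 5 := by
    rw [hgdef]; exact sqrt_ub _ _ (by norm_num) (by linarith only [sq_nonneg ε])
  have hgl : 59 / 100 ≤ g := by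
    rw [hgdef]; exact sqrt_lb _ _ (by norm_num) (by linarith only [hε2])
  obtain ⟨δ, hδdef⟩ : ∃ δ : ℝ, δ = 3 / 5 - g := ⟨_, rfl⟩
  have hδ0 : 0 ≤ δ := by rw [hδdef]; linarith only [hgu]
  have hδg : δ * (3 / 5 + g) = ε ^ 2 := by rw [hδdef]; linear_combination -hg2
  have hδu : δ ≤ ε ^ 2 := by
    linarith only [hδg,
      mul_le_mul_of_nonneg_left (show (1:ℝ) ≤ 3 / 5 + g by linarith only [hgl]) hδ0]
  have hδpos : 0 < δ := by
    linarith only [hδg, hδ0, mul_pos hε0 hε0,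
      mul_le_mul_of_nonneg_left (show (3:ℝ) / 5 + g ≤ 6 / 5 by linarith only [hgu]) hδ0]
  obtain ⟨q, hqdef⟩ : ∃ q : ℝ, q = δ * ε / 2 := ⟨_, rfl⟩
  have hq0 : 0 ≤ q := by rw [hqdef]; linarith only [mul_nonneg hδ0 hε0.le]
  have hqpos : 0 < q := by rw [hqdef]; linarith only [mul_pos hδpos hε0]
  have hq_eps : q ≤ ε := by
    rw [hqdef]
    linarith only [mul_le_mul_of_nonneg_right hδu hε0.le,
      mul_le_mul_of_nonneg_right hε2 hε0.le, hε0.le]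
  have hq3 : q ≤ ε ^ 3 := by
    rw [hqdef]
    linarith only [mul_le_mul_of_nonneg_right hδu hε0.le, pow_nonneg hε0.le 3]
  have hq2 : q ^ 2 ≤ ε ^ 2 := by
    linarith only [mul_nonneg (sub_nonneg.2 hq_eps) hq0,
      mul_nonneg (sub_nonneg.2 hq_eps) hε0.le]
  obtain ⟨p, hpdef⟩ : ∃ p : ℝ, p = Real.sqrt (9 / 25 - q ^ 2) := ⟨_, rfl⟩
  have hp2 : p ^ 2 = 9 / 25 - q ^ 2 := by
    rw [hpdef, Real.sq_sqrt]; linarith only [hq2, hε2]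
  have hp0 : 0 ≤ p := by rw [hpdef]; exact Real.sqrt_nonneg _
  have hpu : p ≤ 3 / 5 := by
    rw [hpdef]; exact sqrt_ub _ _ (by norm_num) (by linarith only [sq_nonneg q])
  have hpl : 59 / 100 ≤ p := by
    rw [hpdef]; exact sqrt_lb _ _ (by norm_num) (by linarith only [hq2, hε2])
  have hgp : g ≤ p := by
    rw [hgdef, hpdef]; exact Real.sqrt_le_sqrt (by linarith only [hq2])
  have hρ : 3 / 5 - p ≤ q ^ 2 := by
    have hq4 : q ^ 2 * q ^ 2 ≤ (1/6400) * q ^ 2 :=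
      mul_le_mul_of_nonneg_right (le_trans hq2 hε2) (sq_nonneg q)
    have h1 : (3 / 5 - q ^ 2) ≤ p := by
      rw [hpdef]
      exact sqrt_lb _ _ (by linarith only [hq2, hε2]) (by nlinarith only [hq4, sq_nonneg q, hq2, hε2])
    linarith only [h1]
  obtain ⟨g', hg'def⟩ : ∃ g' : ℝ, g' = g + p - 3 / 5 := ⟨_, rfl⟩
  have hg'g : g' ≤ g := by rw [hg'def]; linarith only [hpu]
  have hg'l : 58 / 100 ≤ g' := by rw [hg'def]; linarith only [hgl, hpl]
  have hg'u : g' ≤ 3 / 5 := by linarith only [hg'g, hgu]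
  have hg'0 : 0 ≤ g' := by linarith only [hg'l]
  have hg'sq0 : g' * g' ≤ (3/5) * (3/5) := mul_le_mul hg'u hg'u hg'0 (by norm_num)
  obtain ⟨h', hh'def⟩ : ∃ h' : ℝ, h' = Real.sqrt (9 / 25 - g' ^ 2) := ⟨_, rfl⟩
  have hh2 : h' ^ 2 = 9 / 25 - g' ^ 2 := by
    rw [hh'def, Real.sq_sqrt]; nlinarith only [hg'sq0]
  have hh'0 : 0 ≤ h' := by rw [hh'def]; exact Real.sqrt_nonneg _
  have hh'l : ε ≤ h' := by
    rw [hh'def]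
    apply sqrt_lb _ _ hε0.le
    nlinarith only [mul_le_mul hg'g hg'g hg'0 hg0, hg2]
  have hh'u : h' ≤ ε + q := by
    rw [hh'def]
    apply sqrt_ub _ _ (by linarith only [hε0.le, hq0])
    have hgg' : g - g' ≤ q ^ 2 := by rw [hg'def]; linarith only [hρ]
    nlinarith only [hg2, mul_le_mul_of_nonneg_right hgg' (show (0:ℝ) ≤ g + g' by linarith only [hg0, hg'0]),
      mul_le_mul_of_nonneg_left (show g + g' ≤ 6/5 by linarith only [hgu, hg'u]) (sq_nonneg q),
      mul_le_mul_of_nonneg_right hq_eps hq0]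
  have hh'2ε : h' ≤ 2 * ε := by linarith only [hh'u, hq_eps]
  obtain ⟨Δ, hΔdef⟩ : ∃ Δ : ℝ, Δ = ε + q + h' := ⟨_, rfl⟩
  have hΔl : 2 * ε ≤ Δ := by rw [hΔdef]; linarith only [hq0, hh'l]
  have hΔu : Δ ≤ 4 * ε := by rw [hΔdef]; linarith only [hq_eps, hh'2ε]
  have hΔ0 : 0 < Δ := by linarith only [hΔl, hε0]
  obtain ⟨K, hKdef⟩ : ∃ K : ℕ, K = ⌈T / (2 * ε)⌉₊ + 1 := ⟨_, rfl⟩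
  have hK1 : 1 ≤ K := by omega
  have h2ε0 : (0:ℝ) < 2 * ε := by linarith only [hε0]
  have hKc : T / (2 * ε) ≤ (K : ℝ) := by
    rw [hKdef]; push_cast
    have := Nat.le_ceil (T / (2 * ε))
    linarith only [this]
  have hKT : T ≤ (K : ℝ) * Δ := by
    have h1 : T ≤ (K : ℝ) * (2 * ε) := by
      rw [div_le_iff₀ h2ε0] at hKc
      linarith only [hKc]
    have h2 : (K : ℝ) * (2 * ε) ≤ (K : ℝ) * Δ :=
      mul_le_mul_of_nonneg_left hΔl (Nat.cast_nonneg K)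
    linarith only [h1, h2]
  have hTd0 : 0 ≤ T / (2 * ε) := div_nonneg hT0 h2ε0.le
  have hKu : (K : ℝ) ≤ T / (2 * ε) + 2 := by
    rw [hKdef]; push_cast
    have := Nat.ceil_lt_add_one hTd0
    linarith only [this]
  have hKZ : (K : ℝ) * Δ ≤ 2 * T + 1 := by
    have h1 : (K : ℝ) * Δ ≤ (T / (2 * ε) + 2) * (4 * ε) := by
      apply mul_le_mul hKu hΔu hΔ0.le (by linarith only [hTd0])
    have h2 : (T / (2 * ε)) * (4 * ε) = 2 * T := by
      field_simp
      ring
    linarith only [h1, h2, hε1]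
  -- the four moving points
  obtain ⟨A, hAdef⟩ : ∃ A, A = v3 i₀ iy iz (4/5) (-(3/5)) 0 := ⟨_, rfl⟩
  obtain ⟨A', hA'def⟩ : ∃ A', A' = v3 i₀ iy iz (4/5) p q := ⟨_, rfl⟩
  obtain ⟨B, hBdef⟩ : ∃ B, B = v3 i₀ iy iz (-(4/5)) g ε := ⟨_, rfl⟩
  obtain ⟨B', hB'def⟩ : ∃ B', B' = v3 i₀ iy iz (-(4/5)) (-g') h' := ⟨_, rfl⟩
  -- the face vertices
  obtain ⟨Fb, hFbdef⟩ : ∃ Fb : Finset (Fin d), Fb = Finset.univ.filter (fun i : Fin d => (i : ℕ) < b) := ⟨_, rfl⟩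
  obtain ⟨S, hSdef⟩ : ∃ S : Finset (EuclideanSpace ℝ (Fin d)),
      S = Fb.image (fun i => EuclideanSpace.single i (1:ℝ)) ∪
          Fb.image (fun i => EuclideanSpace.single i (-1:ℝ)) := ⟨_, rfl⟩
  obtain ⟨X, hXdef⟩ : ∃ X : Finset (EuclideanSpace ℝ (Fin d)),
      X = S ∪ {A, A', B, B'} := ⟨_, rfl⟩
  -- membership facts
  have hSX : S ⊆ X := by rw [hXdef]; exact Finset.subset_union_left
  have hmemS : ∀ j : Fin d, (j : ℕ) < b →
      EuclideanSpace.single j (1:ℝ) ∈ S ∧ EuclideanSpace.single j (-1:ℝ) ∈ S := by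
    intro j hj
    constructor
    · rw [hSdef]
      apply Finset.mem_union_left
      exact Finset.mem_image.2 ⟨j, by simp [hFbdef, hj], rfl⟩
    · rw [hSdef]
      apply Finset.mem_union_right
      exact Finset.mem_image.2 ⟨j, by simp [hFbdef, hj], rfl⟩
  have hA_mem : A ∈ X := by rw [hXdef]; simp
  have hA'_mem : A' ∈ X := by rw [hXdef]; simp
  have hB_mem : B ∈ X := by rw [hXdef]; simp
  have hB'_mem : B' ∈ X := by rw [hXdef]; simp
  have hX_cases : ∀ x ∈ X,
      (∃ j : Fin d, (j : ℕ) < b ∧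
        (x = EuclideanSpace.single j (1:ℝ) ∨ x = EuclideanSpace.single j (-1:ℝ))) ∨
      x = A ∨ x = A' ∨ x = B ∨ x = B' := by
    intro x hx
    rw [hXdef, Finset.mem_union] at hx
    rcases hx with hx | hx
    · left
      rw [hSdef, Finset.mem_union] at hx
      rcases hx with hx | hx <;>
      · obtain ⟨j, hj, rfl⟩ := Finset.mem_image.1 hx
        rw [hFbdef, Finset.mem_filter] at hj
        exact ⟨j, hj.2, by simp⟩
    · right
      simpa using hx
  -- norms
  have hXnorm : ∀ x ∈ X, ‖x‖ = 1 := by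
    intro x hx
    rcases hX_cases x hx with ⟨j, hj, rfl | rfl⟩ | rfl | rfl | rfl | rfl
    · simp
    · rw [sgl_neg]; simp
    · rw [hAdef]; exact norm_v3 h01 h02 h12 (by norm_num)
    · rw [hA'def]; exact norm_v3 h01 h02 h12 (by linarith)
    · rw [hBdef]; exact norm_v3 h01 h02 h12 (by linarith)
    · rw [hB'def]; exact norm_v3 h01 h02 h12 (by linarith)
  -- exposing functional
  obtain ⟨w, hwdef⟩ : ∃ w, w = v3 i₀ iy iz 0 (-q) 1 := ⟨_, rfl⟩
  obtain ⟨φ, hφdef⟩ : ∃ φ : EuclideanSpace ℝ (Fin d) → ℝ, φ = fun v => ⟪w, v⟫ := ⟨_, rfl⟩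
  have hφadd : ∀ x y, φ (x + y) = φ x + φ y := by
    intro x y; rw [hφdef]; exact inner_add_right _ _ _
  have hφsmul : ∀ (t : ℝ) x, φ (t • x) = t * φ x := by
    intro t x; rw [hφdef]; exact real_inner_smul_right _ _ _
  have hφpad : ∀ (j : Fin d), (j : ℕ) < b → ∀ t : ℝ, φ (EuclideanSpace.single j t) = 0 := by
    intro j hj t
    have hjy : j ≠ iy := by
      intro hh; rw [hiy] at hh; have := congrArg Fin.val hh; simp at this; omega
    have hjz : j ≠ iz := by
      intro hh; rw [hiz] at hh; have := congrArg Fin.val hh; simp at this; omega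
    rw [hφdef]
    show ⟪w, EuclideanSpace.single j t⟫ = 0
    rw [real_inner_comm, hwdef, inner_sgl_v3 hjy hjz]
    split_ifs <;> ring
  have hφA : φ A = 3 / 5 * q := by
    rw [hφdef, hwdef, hAdef]
    show ⟪v3 i₀ iy iz 0 (-q) 1, v3 i₀ iy iz (4/5) (-(3/5)) 0⟫ = 3 / 5 * q
    rw [inner_v3_v3 h01 h02 h12]; ring
  have hφA' : φ A' = q * (1 - p) := by
    rw [hφdef, hwdef, hA'def]
    show ⟪v3 i₀ iy iz 0 (-q) 1, v3 i₀ iy iz (4/5) p q⟫ = q * (1 - p)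
    rw [inner_v3_v3 h01 h02 h12]; ring
  have hφB : φ B = ε - q * g := by
    rw [hφdef, hwdef, hBdef]
    show ⟪v3 i₀ iy iz 0 (-q) 1, v3 i₀ iy iz (-(4/5)) g ε⟫ = ε - q * g
    rw [inner_v3_v3 h01 h02 h12]; ring
  have hφB' : φ B' = q * g' + h' := by
    rw [hφdef, hwdef, hB'def]
    show ⟪v3 i₀ iy iz 0 (-q) 1, v3 i₀ iy iz (-(4/5)) (-g') h'⟫ = q * g' + h'
    rw [inner_v3_v3 h01 h02 h12]; ring
  have hφA_pos : 0 < φ A := by rw [hφA]; positivity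
  have hφA'_pos : 0 < φ A' := by
    rw [hφA']
    have : 0 < 1 - p := by linarith
    positivity
  have hφB_pos : 0 < φ B := by
    rw [hφB]
    linarith [mul_le_mul_of_nonneg_left (show g ≤ 1 by linarith) hq0, hq3,
      mul_le_mul_of_nonneg_left hε2 hε0.le, hε0]
  have hφB'_pos : 0 < φ B' := by
    rw [hφB']
    linarith [mul_nonneg hq0 hg'0]
  have hφX : ∀ x ∈ X, 0 ≤ φ x := by
    intro x hx
    rcases hX_cases x hx with ⟨j, hj, rfl | rfl⟩ | rfl | rfl | rfl | rfl
    · rw [hφpad j hj]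
    · rw [hφpad j hj]
    · exact hφA_pos.le
    · exact hφA'_pos.le
    · exact hφB_pos.le
    · exact hφB'_pos.le
  have hconvX_φ : ∀ v ∈ convexHull ℝ (X : Set (EuclideanSpace ℝ (Fin d))), 0 ≤ φ v := by
    have hconv : Convex ℝ {v : EuclideanSpace ℝ (Fin d) | 0 ≤ φ v} := by
      intro x hx y hy a b' ha hb' hab
      simp only [Set.mem_setOf_eq] at *
      rw [hφadd, hφsmul, hφsmul]
      linarith [mul_nonneg ha hx, mul_nonneg hb' hy]
    exact fun v hv => convexHull_min (fun x hx => hφX x hx) hconv hv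
  have hS_φ : ∀ v ∈ convexHull ℝ (S : Set (EuclideanSpace ℝ (Fin d))), φ v = 0 := by
    have hconv : Convex ℝ {v : EuclideanSpace ℝ (Fin d) | φ v = 0} := by
      intro x hx y hy a b' ha hb' hab
      simp only [Set.mem_setOf_eq] at *
      rw [hφadd, hφsmul, hφsmul, hx, hy]; ring
    refine fun v hv => convexHull_min (fun x hx => ?_) hconv hv
    rw [hSdef, Finset.coe_union] at hx
    rcases hx with hx | hx <;>
    · simp only [Finset.coe_image, Set.mem_image, Finset.mem_coe] at hx
      obtain ⟨j, hj, rfl⟩ := hx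
      rw [hFbdef, Finset.mem_filter] at hj
      exact hφpad j hj.2 _
  have hkey : ∀ v ∈ convexHull ℝ (X : Set (EuclideanSpace ℝ (Fin d))), φ v = 0 →
      v ∈ convexHull ℝ (S : Set (EuclideanSpace ℝ (Fin d))) := by
    intro v hv hv0
    rw [Finset.convexHull_eq] at hv
    obtain ⟨wg, hwg0, hwg1, hcm⟩ := hv
    rw [Finset.centerMass_eq_of_sum_1 _ _ hwg1] at hcm
    have hsum_φ : ∑ y ∈ X, wg y * φ y = 0 := by
      have hvφ : φ v = ∑ y ∈ X, wg y * φ y := by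
        rw [← hcm, hφdef]
        show ⟪w, ∑ y ∈ X, wg y • id y⟫ = _
        rw [inner_sum]
        refine Finset.sum_congr rfl fun y hy => ?_
        rw [real_inner_smul_right]
        simp
      exact hvφ.symm.trans hv0
    have hterm : ∀ y ∈ X, wg y * φ y = 0 :=
      (Finset.sum_eq_zero_iff_of_nonneg
        (fun y hy => mul_nonneg (hwg0 y hy) (hφX y hy))).1 hsum_φ
    have hwO : ∀ y ∈ X, y ∉ S → wg y = 0 := by
      intro y hyX hyS
      rcases hX_cases y hyX with ⟨j, hj, rfl | rfl⟩ | rfl | rfl | rfl | rfl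
      · exact absurd (hmemS j hj).1 hyS
      · exact absurd (hmemS j hj).2 hyS
      · exact (mul_eq_zero.1 (hterm _ hyX)).resolve_right (ne_of_gt hφA_pos)
      · exact (mul_eq_zero.1 (hterm _ hyX)).resolve_right (ne_of_gt hφA'_pos)
      · exact (mul_eq_zero.1 (hterm _ hyX)).resolve_right (ne_of_gt hφB_pos)
      · exact (mul_eq_zero.1 (hterm _ hyX)).resolve_right (ne_of_gt hφB'_pos)
    have hs1 : ∑ y ∈ S, wg y = 1 := by
      rw [← hwg1]
      exact Finset.sum_subset hSX (fun y hy hys => hwO y hy hys)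
    have hvs : ∑ y ∈ S, wg y • id y = v := by
      rw [← hcm]
      apply Finset.sum_subset hSX
      intro y hy hys
      rw [hwO y hy hys, zero_smul]
    rw [Finset.convexHull_eq]
    refine ⟨wg, fun y hy => hwg0 y (hSX hy), hs1, ?_⟩
    rw [Finset.centerMass_eq_of_sum_1 _ _ hs1]
    exact hvs
  have hFextreme : IsExtreme ℝ (convexHull ℝ (X : Set (EuclideanSpace ℝ (Fin d))))
      (convexHull ℝ (S : Set (EuclideanSpace ℝ (Fin d)))) := by
    constructor
    · exact convexHull_mono (Finset.coe_subset.2 hSX)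
    · intro x₁ hx₁ x₂ hx₂ x hxF hseg
      obtain ⟨a, b', ha, hb', hab, hsum⟩ := hseg
      have h1 := hconvX_φ _ hx₁
      have h2 := hconvX_φ _ hx₂
      have h0 : φ x = 0 := hS_φ _ hxF
      have hc : a * φ x₁ + b' * φ x₂ = 0 := by
        rw [← hφsmul, ← hφsmul, ← hφadd, hsum]; exact h0
      have e1 : φ x₁ = 0 := by
        by_contra hne
        have hpos : 0 < φ x₁ := lt_of_le_of_ne h1 (Ne.symm hne)
        linarith [mul_pos ha hpos, mul_nonneg hb'.le h2]
      have e2 : φ x₂ = 0 := by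
        by_contra hne
        have hpos : 0 < φ x₂ := lt_of_le_of_ne h2 (Ne.symm hne)
        linarith [mul_pos hb' hpos, mul_nonneg ha.le h1]
      exact hkey _ hx₁ e1
  have h0S : (0 : EuclideanSpace ℝ (Fin d)) ∈
      convexHull ℝ (S : Set (EuclideanSpace ℝ (Fin d))) := by
    have hib : ((i₀ : Fin d) : ℕ) < b := by rw [hi₀]; exact hb1
    have h1 : EuclideanSpace.single i₀ (1:ℝ) ∈ convexHull ℝ (S : Set (EuclideanSpace ℝ (Fin d))) :=
      subset_convexHull _ _ (by exact_mod_cast (hmemS i₀ hib).1)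
    have h2 : EuclideanSpace.single i₀ (-1:ℝ) ∈ convexHull ℝ (S : Set (EuclideanSpace ℝ (Fin d))) :=
      subset_convexHull _ _ (by exact_mod_cast (hmemS i₀ hib).2)
    have hcomb : (1/2 : ℝ) • EuclideanSpace.single i₀ (1:ℝ) +
        (1/2 : ℝ) • EuclideanSpace.single i₀ (-1:ℝ) = 0 := by
      rw [sgl_neg, smul_neg]; exact add_neg_cancel _
    rw [← hcomb]
    exact (convex_convexHull ℝ _) h1 h2 (by norm_num) (by norm_num) (by norm_num)
  -- the dimension of the face
  obtain ⟨emb, hembdef⟩ : ∃ emb : Fin b → Fin d, emb = fun j => ⟨(j : ℕ), by omega⟩ := ⟨_, rfl⟩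
  have hembval : ∀ j, ((emb j : Fin d) : ℕ) = (j : ℕ) := by intro j; rw [hembdef]
  have hemb_inj : Function.Injective emb := by
    intro a c h
    have := congrArg Fin.val h
    rw [hembval, hembval] at this
    exact Fin.ext this
  obtain ⟨fam, hfamdef⟩ : ∃ fam : Fin b → EuclideanSpace ℝ (Fin d),
      fam = fun j => EuclideanSpace.single (emb j) 1 := ⟨_, rfl⟩
  have hON : Orthonormal ℝ fam := by
    rw [hfamdef]
    exact Orthonormal.comp (EuclideanSpace.orthonormal_single (𝕜 := ℝ) (ι := Fin d)) emb hemb_inj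
  have hLI := hON.linearIndependent
  obtain ⟨W, hWdef⟩ : ∃ W : Submodule ℝ (EuclideanSpace ℝ (Fin d)),
      W = Submodule.span ℝ (Set.range fam) := ⟨_, rfl⟩
  have hfinW : Module.finrank ℝ W = b := by
    rw [hWdef, finrank_span_eq_card hLI, Fintype.card_fin]
  have hSW : (S : Set (EuclideanSpace ℝ (Fin d))) ⊆ (W : Set (EuclideanSpace ℝ (Fin d))) := by
    intro x hx
    simp only [Finset.mem_coe] at hx
    rw [hSdef, Finset.mem_union] at hx
    have hmem1 : ∀ j : Fin d, (j : ℕ) < b → EuclideanSpace.single j (1:ℝ) ∈ W := by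
      intro j hj
      rw [hWdef]
      refine Submodule.subset_span ⟨⟨(j : ℕ), hj⟩, ?_⟩
      rw [hfamdef]
      congr 1
      rw [hembdef]
    rcases hx with hx | hx <;> obtain ⟨j, hj, rfl⟩ := Finset.mem_image.1 hx <;>
      rw [hFbdef, Finset.mem_filter] at hj
    · exact hmem1 j hj.2
    · rw [sgl_neg]
      exact Submodule.neg_mem _ (hmem1 j hj.2)
  have hFW : convexHull ℝ (S : Set (EuclideanSpace ℝ (Fin d))) ⊆
      (W : Set (EuclideanSpace ℝ (Fin d))) := convexHull_min hSW W.convex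
  have hfamS : ∀ j : Fin b, fam j ∈ convexHull ℝ (S : Set (EuclideanSpace ℝ (Fin d))) := by
    intro j
    apply subset_convexHull
    rw [hfamdef]
    exact_mod_cast (hmemS (emb j) (by rw [hembval]; exact j.2)).1
  have hVS : vectorSpan ℝ (convexHull ℝ (S : Set (EuclideanSpace ℝ (Fin d)))) = W := by
    apply le_antisymm
    · rw [vectorSpan_def]
      apply Submodule.span_le.2
      rintro v ⟨v1, hv1, v2, hv2, rfl⟩
      have m1 : v1 ∈ W := hFW hv1
      have m2 : v2 ∈ W := hFW hv2
      simpa [vsub_eq_sub] using W.sub_mem m1 m2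
    · rw [hWdef]
      apply Submodule.span_le.2
      rintro v ⟨j, rfl⟩
      have := vsub_mem_vectorSpan ℝ (hfamS j) h0S
      simpa [vsub_eq_sub] using this
  have hdim : Module.finrank ℝ
      (vectorSpan ℝ (convexHull ℝ (S : Set (EuclideanSpace ℝ (Fin d))))) = b := by
    rw [hVS]; exact hfinW
  have hlow : ∀ F : Set (EuclideanSpace ℝ (Fin d)),
      IsExtreme ℝ (convexHull ℝ (X : Set (EuclideanSpace ℝ (Fin d)))) F →
      (0 : EuclideanSpace ℝ (Fin d)) ∈ F → b ≤ Module.finrank ℝ (vectorSpan ℝ F) := by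
    intro F hF h0F
    have hfamF : ∀ j : Fin b, fam j ∈ F := by
      intro j
      have hjb : ((emb j : Fin d) : ℕ) < b := by rw [hembval]; exact j.2
      have hm1 : fam j ∈ convexHull ℝ (X : Set (EuclideanSpace ℝ (Fin d))) :=
        subset_convexHull _ _ (by rw [hfamdef]; exact_mod_cast hSX (hmemS _ hjb).1)
      have hm2 : -fam j ∈ convexHull ℝ (X : Set (EuclideanSpace ℝ (Fin d))) :=
        subset_convexHull _ _ (by
          rw [hfamdef]
          show -EuclideanSpace.single (emb j) (1:ℝ) ∈ _
          rw [← sgl_neg]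
          exact_mod_cast hSX (hmemS _ hjb).2)
      have hseg : (0 : EuclideanSpace ℝ (Fin d)) ∈ openSegment ℝ (fam j) (-fam j) := by
        refine ⟨1/2, 1/2, by norm_num, by norm_num, by norm_num, ?_⟩
        rw [smul_neg]; exact add_neg_cancel _
      exact hF.2 hm1 hm2 h0F hseg
    have hWle : W ≤ vectorSpan ℝ F := by
      rw [hWdef]
      apply Submodule.span_le.2
      rintro v ⟨j, rfl⟩
      have := vsub_mem_vectorSpan ℝ (hfamF j) h0F
      simpa [vsub_eq_sub] using this
    calc b = Module.finrank ℝ W := hfinW.symm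
    _ ≤ Module.finrank ℝ (vectorSpan ℝ F) := Submodule.finrank_mono hWle
  have hbal : IsBBalanced d b X :=
    ⟨⟨convexHull ℝ (S : Set (EuclideanSpace ℝ (Fin d))), hFextreme, h0S, hdim⟩, hlow⟩
  -- trajectory
  have v3_congr : ∀ {a b c x y z : ℝ}, a = x → b = y → c = z →
      v3 i₀ iy iz a b c = v3 i₀ iy iz x y z := by
    intro a b c x y z h1 h2 h3; rw [h1, h2, h3]
  have hib : ((i₀ : Fin d) : ℕ) < b := by rw [hi₀]; exact hb1
  have hpadv : ∀ (j : Fin d), (j : ℕ) < b → ∀ t a bb c : ℝ,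
      ⟪EuclideanSpace.single j t, v3 i₀ iy iz a bb c⟫ = if j = i₀ then t * a else 0 := by
    intro j hj t a bb c
    have hjy : j ≠ iy := by
      intro hh; rw [hiy] at hh; have := congrArg Fin.val hh; simp at this; omega
    have hjz : j ≠ iz := by
      intro hh; rw [hiz] at hh; have := congrArg Fin.val hh; simp at this; omega
    exact inner_sgl_v3 hjy hjz t a bb c
  have hE1_mem : EuclideanSpace.single i₀ (1:ℝ) ∈ X := hSX (hmemS i₀ hib).1
  have hE2_mem : EuclideanSpace.single i₀ (-1:ℝ) ∈ X := hSX (hmemS i₀ hib).2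
  obtain ⟨Z, hZdef⟩ : ∃ Z : ℝ, Z = (K : ℝ) * Δ := ⟨_, rfl⟩
  have hZ0 : 0 ≤ Z := by rw [hZdef]; positivity
  obtain ⟨uf, hufdef⟩ : ∃ uf : ℕ → EuclideanSpace ℝ (Fin d), uf = fun n =>
      if n ≤ 4 * K then
        (if n % 4 = 0 then v3 i₀ iy iz 0 0 ((n / 4 : ℕ) * Δ)
         else if n % 4 = 1 then v3 i₀ iy iz (4/5) (-(3/5)) ((n / 4 : ℕ) * Δ)
         else if n % 4 = 2 then v3 i₀ iy iz 0 (-δ) ((n / 4 : ℕ) * Δ + ε)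
         else v3 i₀ iy iz (4/5) g' ((n / 4 : ℕ) * Δ + ε + q))
      else (if (n - 4 * K) % 2 = 0 then v3 i₀ iy iz 0 0 Z else v3 i₀ iy iz 1 0 Z) := ⟨_, rfl⟩
  have hu_0 : ∀ n, n ≤ 4 * K → n % 4 = 0 → uf n = v3 i₀ iy iz 0 0 ((n / 4 : ℕ) * Δ) := by
    intro n hn hr; rw [hufdef]; show (if _ then _ else _) = _; rw [if_pos hn, if_pos hr]
  have hu_1 : ∀ n, n ≤ 4 * K → n % 4 = 1 →
      uf n = v3 i₀ iy iz (4/5) (-(3/5)) ((n / 4 : ℕ) * Δ) := by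
    intro n hn hr; rw [hufdef]; show (if _ then _ else _) = _
    rw [if_pos hn, if_neg (by omega), if_pos hr]
  have hu_2 : ∀ n, n ≤ 4 * K → n % 4 = 2 →
      uf n = v3 i₀ iy iz 0 (-δ) ((n / 4 : ℕ) * Δ + ε) := by
    intro n hn hr; rw [hufdef]; show (if _ then _ else _) = _
    rw [if_pos hn, if_neg (by omega), if_neg (by omega), if_pos hr]
  have hu_3 : ∀ n, n ≤ 4 * K → n % 4 = 3 →
      uf n = v3 i₀ iy iz (4/5) g' ((n / 4 : ℕ) * Δ + ε + q) := by
    intro n hn hr; rw [hufdef]; show (if _ then _ else _) = _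
    rw [if_pos hn, if_neg (by omega), if_neg (by omega), if_neg (by omega)]
  have hu_t0 : ∀ n, 4 * K < n → (n - 4 * K) % 2 = 0 → uf n = v3 i₀ iy iz 0 0 Z := by
    intro n hn hr; rw [hufdef]; show (if _ then _ else _) = _
    rw [if_neg (by omega), if_pos hr]
  have hu_t1 : ∀ n, 4 * K < n → (n - 4 * K) % 2 = 1 → uf n = v3 i₀ iy iz 1 0 Z := by
    intro n hn hr; rw [hufdef]; show (if _ then _ else _) = _
    rw [if_neg (by omega), if_neg (by omega)]
  have hu_4K : uf (4 * K) = v3 i₀ iy iz 0 0 Z := by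
    rw [hu_0 (4 * K) le_rfl (by omega)]
    have h44 : 4 * K / 4 = K := by omega
    rw [h44, ← hZdef]
  have hεz : ∀ z : ℝ, 0 ≤ z → z ≤ 2 * T + 1 → ε * z ≤ 1 / 20 := by
    intro z h0 h1
    calc ε * z ≤ ε * (2 * T + 2) := by
          apply mul_le_mul_of_nonneg_left _ hε0.le; linarith
    _ ≤ 1 / 20 := hεT
  refine ⟨X, hXnorm, hbal, uf, ?_, ?_, ⟨4 * K, ?_⟩⟩
  · -- u 0 = 0
    rw [hu_0 0 (by omega) (by omega)]
    have : ((0 / 4 : ℕ) : ℝ) * Δ = 0 := by norm_num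
    rw [this]
    exact v3_zero
  · -- the steps
    intro i
    by_cases hi : i < 4 * K
    · have hi' : i ≤ 4 * K := hi.le
      obtain ⟨z, hz_eq⟩ : ∃ z : ℝ, z = ((i / 4 : ℕ) : ℝ) * Δ := ⟨_, rfl⟩
      have hz0 : 0 ≤ z := by rw [hz_eq]; positivity
      have hzb : z ≤ 2 * T + 1 := by
        rw [hz_eq]
        calc ((i / 4 : ℕ) : ℝ) * Δ ≤ (K : ℝ) * Δ := by
              apply mul_le_mul_of_nonneg_right _ hΔ0.le
              exact_mod_cast (by omega : i / 4 ≤ K)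
        _ ≤ 2 * T + 1 := hKZ
      have hez : ε * z ≤ 1 / 20 := hεz z hz0 hzb
      have hr4 : i % 4 = 0 ∨ i % 4 = 1 ∨ i % 4 = 2 ∨ i % 4 = 3 := by omega
      rcases hr4 with hr | hr | hr | hr
      · -- step A
        have hui := hu_0 i hi' hr
        rw [← hz_eq] at hui
        have hui1 := hu_1 (i + 1) (by omega) (by omega)
        have hdiv : (i + 1) / 4 = i / 4 := by omega
        rw [hdiv, ← hz_eq] at hui1
        refine ⟨A, hA_mem, ?_, ?_⟩
        · intro x hx
          have hchos : ⟪A, uf i⟫ = 4/5 * 0 + -(3/5) * 0 + 0 * z := by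
            rw [hAdef, hui, inner_v3_v3 h01 h02 h12]
          rw [hchos]
          rcases hX_cases x hx with ⟨j, hj, rfl | rfl⟩ | rfl | rfl | rfl | rfl
          · rw [hui, hpadv j hj]; split_ifs <;> linarith
          · rw [hui, hpadv j hj]; split_ifs <;> linarith
          · rw [← hchos]
          · rw [hui, hA'def, inner_v3_v3 h01 h02 h12]
            linarith [mul_nonneg hq0 hz0]
          · rw [hui, hBdef, inner_v3_v3 h01 h02 h12]
            linarith [mul_nonneg hε0.le hz0]
          · rw [hui, hB'def, inner_v3_v3 h01 h02 h12]
            linarith [mul_nonneg hh'0 hz0]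
        · rw [hui1, hui, hAdef, v3_add]
          exact v3_congr (by ring) (by ring) (by ring)
      · -- step B
        have hui := hu_1 i hi' hr
        rw [← hz_eq] at hui
        have hui1 := hu_2 (i + 1) (by omega) (by omega)
        have hdiv : (i + 1) / 4 = i / 4 := by omega
        rw [hdiv, ← hz_eq] at hui1
        have hkey1 : -(4/5) * (4/5) + g * (-(3/5)) + ε * z ≤ -(4/5) := by linarith
        refine ⟨B, hB_mem, ?_, ?_⟩
        · intro x hx
          have hchos : ⟪B, uf i⟫ = -(4/5) * (4/5) + g * (-(3/5)) + ε * z := by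
            rw [hBdef, hui, inner_v3_v3 h01 h02 h12]
          rw [hchos]
          rcases hX_cases x hx with ⟨j, hj, rfl | rfl⟩ | rfl | rfl | rfl | rfl
          · rw [hui, hpadv j hj]; split_ifs <;> linarith
          · rw [hui, hpadv j hj]; split_ifs <;> linarith
          · rw [hui, hAdef, inner_v3_v3 h01 h02 h12]; linarith
          · rw [hui, hA'def, inner_v3_v3 h01 h02 h12]
            linarith [mul_nonneg hq0 hz0]
          · rw [← hchos]
          · rw [hui, hB'def, inner_v3_v3 h01 h02 h12]
            linarith [mul_le_mul_of_nonneg_right hh'l hz0, mul_nonneg hg0 hz0,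
              mul_nonneg hg'0 hz0]
        · rw [hui1, hui, hBdef, v3_add]
          exact v3_congr (by ring) (by rw [hδdef]; ring) (by ring)
      · -- step A'
        have hui := hu_2 i hi' hr
        rw [← hz_eq] at hui
        have hui1 := hu_3 (i + 1) (by omega) (by omega)
        have hdiv : (i + 1) / 4 = i / 4 := by omega
        rw [hdiv, ← hz_eq] at hui1
        have e1 : ε * (z + ε) / 2 ≤ p := by linarith [hez, hε2, hpl]
        have e2 : q * (z + ε) ≤ p * δ := by
          have e3 : q * (z + ε) = δ * (ε * (z + ε) / 2) := by rw [hqdef]; ring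
          rw [e3]
          calc δ * (ε * (z + ε) / 2) ≤ δ * p := mul_le_mul_of_nonneg_left e1 hδ0
          _ = p * δ := mul_comm _ _
        have hkey2 : 4/5 * 0 + p * (-δ) + q * (z + ε) ≤ 0 := by linarith [e2]
        refine ⟨A', hA'_mem, ?_, ?_⟩
        · intro x hx
          have hchos : ⟪A', uf i⟫ = 4/5 * 0 + p * (-δ) + q * (z + ε) := by
            rw [hA'def, hui, inner_v3_v3 h01 h02 h12]
          rw [hchos]
          rcases hX_cases x hx with ⟨j, hj, rfl | rfl⟩ | rfl | rfl | rfl | rfl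
          · rw [hui, hpadv j hj]; split_ifs <;> linarith
          · rw [hui, hpadv j hj]; split_ifs <;> linarith
          · rw [hui, hAdef, inner_v3_v3 h01 h02 h12]
            linarith [mul_nonneg hδ0 hz0]
          · rw [← hchos]
          · rw [hui, hBdef, inner_v3_v3 h01 h02 h12]
            linarith [mul_le_mul_of_nonneg_right hgp hδ0,
              mul_le_mul_of_nonneg_right hq_eps (show (0:ℝ) ≤ z + ε by linarith)]
          · rw [hui, hB'def, inner_v3_v3 h01 h02 h12]
            linarith [mul_nonneg hg'0 hδ0,
              mul_nonneg hh'0 (show (0:ℝ) ≤ z + ε by linarith)]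
        · rw [hui1, hui, hA'def, v3_add]
          exact v3_congr (by ring) (by rw [hg'def, hδdef]; ring) (by ring)
      · -- step B'
        have hui := hu_3 i hi' hr
        rw [← hz_eq] at hui
        have hui1 := hu_0 (i + 1) (by omega) (by omega)
        have hdiv : (i + 1) / 4 = i / 4 + 1 := by omega
        rw [hdiv] at hui1
        have hz'0 : (0:ℝ) ≤ z + ε + q := by linarith
        have hqz : q * z ≤ ε * z := mul_le_mul_of_nonneg_right hq_eps hz0
        have hh'z : h' * (z + ε + q) ≤ 11 / 100 := by
          have e1 : h' * (z + ε + q) ≤ (ε + q) * (z + ε + q) :=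
            mul_le_mul_of_nonneg_right hh'u hz'0
          linarith [mul_le_mul_of_nonneg_left hq_eps hε0.le,
            mul_le_mul_of_nonneg_right hq_eps hq0, hε2, hez, hqz]
        have hg'sq : 58 / 100 * (58 / 100) ≤ g' * g' :=
          mul_le_mul hg'l hg'l (by norm_num) hg'0
        have hkey3 : -(4/5) * (4/5) + -g' * g' + h' * (z + ε + q) ≤ -(4/5) := by linarith [hh'z, hg'sq]
        refine ⟨B', hB'_mem, ?_, ?_⟩
        · intro x hx
          have hchos : ⟪B', uf i⟫ = -(4/5) * (4/5) + -g' * g' + h' * (z + ε + q) := by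
            rw [hB'def, hui, inner_v3_v3 h01 h02 h12]
          rw [hchos]
          rcases hX_cases x hx with ⟨j, hj, rfl | rfl⟩ | rfl | rfl | rfl | rfl
          · rw [hui, hpadv j hj]; split_ifs <;> linarith
          · rw [hui, hpadv j hj]; split_ifs <;> linarith
          · rw [hui, hAdef, inner_v3_v3 h01 h02 h12]; linarith
          · rw [hui, hA'def, inner_v3_v3 h01 h02 h12]
            linarith [mul_nonneg hp0 hg'0, mul_nonneg hq0 hz'0]
          · rw [hui, hBdef, inner_v3_v3 h01 h02 h12]
            linarith [mul_le_mul hgl hg'l (by norm_num) hg0,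
              mul_nonneg hε0.le hz'0]
          · rw [← hchos]
        · rw [hui1, hui, hB'def, v3_add]
          refine v3_congr (by ring) (by ring) ?_
          push_cast
          rw [hz_eq, hΔdef]
          ring
    · -- tail
      have hi4 : 4 * K ≤ i := by omega
      by_cases hpar : (i - 4 * K) % 2 = 0
      · have hui : uf i = v3 i₀ iy iz 0 0 Z := by
          rcases Nat.eq_or_lt_of_le hi4 with he | hlt
          · rw [← he]; exact hu_4K
          · exact hu_t0 i hlt hpar
        have hui1 : uf (i + 1) = v3 i₀ iy iz 1 0 Z := hu_t1 (i + 1) (by omega) (by omega)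
        refine ⟨EuclideanSpace.single i₀ (1:ℝ), hE1_mem, ?_, ?_⟩
        · intro x hx
          have hchos : ⟪EuclideanSpace.single i₀ (1:ℝ), uf i⟫ = 0 := by
            rw [hui, hpadv i₀ hib, if_pos rfl]; ring
          rw [hchos]
          rcases hX_cases x hx with ⟨j, hj, rfl | rfl⟩ | rfl | rfl | rfl | rfl
          · rw [hui, hpadv j hj]; split_ifs <;> linarith
          · rw [hui, hpadv j hj]; split_ifs <;> linarith
          · rw [hui, hAdef, inner_v3_v3 h01 h02 h12]; linarith
          · rw [hui, hA'def, inner_v3_v3 h01 h02 h12]; linarith [mul_nonneg hq0 hZ0]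
          · rw [hui, hBdef, inner_v3_v3 h01 h02 h12]; linarith [mul_nonneg hε0.le hZ0]
          · rw [hui, hB'def, inner_v3_v3 h01 h02 h12]; linarith [mul_nonneg hh'0 hZ0]
        · rw [hui1, hui, ← v3_single (i₀ := i₀) (iy := iy) (iz := iz), v3_add]
          exact v3_congr (by ring) (by ring) (by ring)
      · have hpar1 : (i - 4 * K) % 2 = 1 := by omega
        have hlt : 4 * K < i := by omega
        have hui : uf i = v3 i₀ iy iz 1 0 Z := hu_t1 i hlt hpar1
        have hui1 : uf (i + 1) = v3 i₀ iy iz 0 0 Z := hu_t0 (i + 1) (by omega) (by omega)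
        refine ⟨EuclideanSpace.single i₀ (-1:ℝ), hE2_mem, ?_, ?_⟩
        · intro x hx
          have hchos : ⟪EuclideanSpace.single i₀ (-1:ℝ), uf i⟫ = -1 := by
            rw [hui, hpadv i₀ hib, if_pos rfl]; ring
          rw [hchos]
          rcases hX_cases x hx with ⟨j, hj, rfl | rfl⟩ | rfl | rfl | rfl | rfl
          · rw [hui, hpadv j hj]; split_ifs <;> linarith
          · rw [hui, hpadv j hj]; split_ifs <;> linarith
          · rw [hui, hAdef, inner_v3_v3 h01 h02 h12]; linarith
          · rw [hui, hA'def, inner_v3_v3 h01 h02 h12]; linarith [mul_nonneg hq0 hZ0]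
          · rw [hui, hBdef, inner_v3_v3 h01 h02 h12]; linarith [mul_nonneg hε0.le hZ0]
          · rw [hui, hB'def, inner_v3_v3 h01 h02 h12]; linarith [mul_nonneg hh'0 hZ0]
        · rw [hui1, hui, ← v3_single (i₀ := i₀) (iy := iy) (iz := iz), v3_add]
          exact v3_congr (by ring) (by ring) (by ring)
  · -- the norm at time 4K
    rw [hu_4K, norm_v3_z h01 h02 h12 Z hZ0, ← hTdef, hZdef]
    exact hKT
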